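/- Let K be a field of characteristic p > 2 and n > 1. Every cyclic 1-cocycle on O_n = K[x₁,...,x_n]/(x₁^p,...,x_n^p) that is invariant under all derivations of O_n is zero. That is, if φ : O_n × O_n → K is skew-symmetric, satisfies φ(ab,c)+φ(bc,a)+φ(ca,b)=0, and φ(D(a),b)+φ(a,D(b))=0 for all D ∈ Der(O_n), then φ = 0. -/

import Mathlib

set_option synthInstance.maxHeartbeats 1000000
set_option maxHeartbeats 1000000

/-- The reduced polynomial algebra O_n = K[x₁,...,x_n]/(x₁^p,...,x_n^p). -/
abbrev TruncPolyAlg (K : Type) [Field K] (n p : ℕ) : Type :=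
  MvPolynomial (Fin n) K ⧸
    Ideal.span (Set.range fun i : Fin n => (MvPolynomial.X i : MvPolynomial (Fin n) K) ^ p)

section Aux

open MvPolynomial

variable (K : Type) [Field K] (n p : ℕ)

/-- The defining ideal. -/
noncomputable abbrev truncIdeal : Ideal (MvPolynomial (Fin n) K) :=
  Ideal.span (Set.range fun i : Fin n => (MvPolynomial.X i : MvPolynomial (Fin n) K) ^ p)

variable [CharP K p]

lemma pderiv_mem_truncIdeal (i : Fin n) {f : MvPolynomial (Fin n) K}
    (hf : f ∈ truncIdeal K n p) : pderiv i f ∈ truncIdeal K n p := by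
  classical
  set I := truncIdeal K n p with hI
  let J : Ideal (MvPolynomial (Fin n) K) :=
    { carrier := {f | f ∈ I ∧ pderiv i f ∈ I}
      add_mem' := fun ha hb => ⟨I.add_mem ha.1 hb.1, by
        rw [map_add]; exact I.add_mem ha.2 hb.2⟩
      zero_mem' := ⟨I.zero_mem, by rw [map_zero]; exact I.zero_mem⟩
      smul_mem' := fun c x hx => ⟨I.smul_mem c hx.1, by
        rw [smul_eq_mul, pderiv_mul]
        exact I.add_mem (I.mul_mem_left _ hx.1) (I.mul_mem_left _ hx.2)⟩ }
  have hle : I ≤ J := by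
    rw [hI, truncIdeal]
    refine Ideal.span_le.2 ?_
    rintro _ ⟨k, rfl⟩
    refine ⟨Ideal.subset_span ⟨k, rfl⟩, ?_⟩
    have : pderiv i ((X k : MvPolynomial (Fin n) K) ^ p) = 0 := by
      rw [pderiv_pow]
      have : ((p : ℕ) : MvPolynomial (Fin n) K) = 0 := by
        exact_mod_cast CharP.cast_eq_zero (MvPolynomial (Fin n) K) p
      rw [this, zero_mul, zero_mul]
    rw [this]
    exact I.zero_mem
  exact (hle hf).2

/-- The linear map underlying ∂ᵢ on the truncated algebra. -/
noncomputable def truncPDerivLin (i : Fin n) : TruncPolyAlg K n p →ₗ[K] TruncPolyAlg K n p :=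
  (Submodule.liftQ ((truncIdeal K n p).restrictScalars K)
      ((Ideal.Quotient.mkₐ K (truncIdeal K n p)).toLinearMap ∘ₗ
        (pderiv (R := K) i).toLinearMap)
      (fun f hf => Ideal.Quotient.eq_zero_iff_mem.2 (pderiv_mem_truncIdeal K n p i hf))) ∘ₗ
    (Submodule.Quotient.restrictScalarsEquiv K (truncIdeal K n p)).symm.toLinearMap

lemma truncPDerivLin_mk (i : Fin n) (f : MvPolynomial (Fin n) K) :
    truncPDerivLin K n p i (Ideal.Quotient.mk (truncIdeal K n p) f)
      = Ideal.Quotient.mk (truncIdeal K n p) (pderiv i f) := rfl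

/-- The derivation ∂ᵢ on the truncated algebra. -/
noncomputable def truncPDeriv (i : Fin n) :
    Derivation K (TruncPolyAlg K n p) (TruncPolyAlg K n p) :=
  Derivation.mk' (truncPDerivLin K n p i) (by
    intro a b
    obtain ⟨f, rfl⟩ := Ideal.Quotient.mk_surjective a
    obtain ⟨g, rfl⟩ := Ideal.Quotient.mk_surjective b
    rw [← map_mul, truncPDerivLin_mk, truncPDerivLin_mk, truncPDerivLin_mk, pderiv_mul,
      map_add, map_mul, map_mul]
    rw [smul_eq_mul, smul_eq_mul]
    ring)

lemma truncPDeriv_mk (i : Fin n) (f : MvPolynomial (Fin n) K) :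
    truncPDeriv K n p i (Ideal.Quotient.mk (truncIdeal K n p) f)
      = Ideal.Quotient.mk (truncIdeal K n p) (pderiv i f) :=
  truncPDerivLin_mk K n p i f

end Aux

open MvPolynomial in
/-- for p > 2 and n > 1, every cyclic 1-cocycle on O_n
invariant under all derivations of O_n is zero. -/
theorem stmt_10 (K : Type) [Field K] (p n : ℕ) (hp : p.Prime) (hp2 : 2 < p)
    [CharP K p] (hn : 1 < n)
    (φ : TruncPolyAlg K n p →ₗ[K] TruncPolyAlg K n p →ₗ[K] K)
    (hs : ∀ a b, φ a b = - φ b a)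
    (hc : ∀ a b c, φ (a * b) c + φ (b * c) a + φ (c * a) b = 0)
    (hinv : ∀ (D : Derivation K (TruncPolyAlg K n p) (TruncPolyAlg K n p))
      (a b : TruncPolyAlg K n p), φ (D a) b + φ a (D b) = 0) :
    φ = 0 := by
  classical
  let i : Fin n := ⟨0, by omega⟩
  let j : Fin n := ⟨1, by omega⟩
  have hij : i ≠ j := by simp [i, j, Fin.ext_iff]
  -- Step 1: φ(xᵢ, g) = 0 for all g, using invariance under the derivation g·∂ⱼ
  have key0 : ∀ g : TruncPolyAlg K n p,
      φ (Ideal.Quotient.mk (truncIdeal K n p) (X i)) g = 0 := by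
    intro g
    have h := hinv (g • truncPDeriv K n p j)
      (Ideal.Quotient.mk (truncIdeal K n p) (X i))
      (Ideal.Quotient.mk (truncIdeal K n p) (X j))
    rw [Derivation.smul_apply, Derivation.smul_apply] at h
    rw [truncPDeriv_mk, truncPDeriv_mk] at h
    rw [pderiv_X_of_ne hij, pderiv_X_self] at h
    rw [map_zero, smul_zero, map_zero, LinearMap.zero_apply, zero_add] at h
    rw [map_one, smul_eq_mul, mul_one] at h
    exact h
  -- Step 2: φ(f, g) = 0 for all f, g, using invariance under the derivation f·∂ᵢ
  have key : ∀ f g : TruncPolyAlg K n p, φ f g = 0 := by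
    intro f g
    have h := hinv (f • truncPDeriv K n p i)
      (Ideal.Quotient.mk (truncIdeal K n p) (X i)) g
    rw [Derivation.smul_apply, Derivation.smul_apply] at h
    rw [truncPDeriv_mk] at h
    rw [pderiv_X_self] at h
    rw [map_one, smul_eq_mul, mul_one] at h
    rw [key0, add_zero] at h
    exact h
  refine LinearMap.ext fun f => LinearMap.ext fun g => ?_
  rw [LinearMap.zero_apply, LinearMap.zero_apply]
  exact key f g
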